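/- Let c, A, B, b₀ ∈ ℝ with c > 0. Suppose h : ℝ → ℝ is C² and there is a function H with H(s) → −b₀ as s → ∞ such that h'' + (2cs + A·h + B)·h' = H(s) for all s, and suppose h'(s) → 0 as s → ∞. Then s·h'(s) → −b₀/(2c) as s → ∞. -/

import Mathlib

open Filter Real Set

lemma lhop_top (N D N' D' : ℝ → ℝ) (L : ℝ)
    (hN : ∀ᶠ x in atTop, HasDerivAt N (N' x) x)
    (hD : ∀ᶠ x in atTop, HasDerivAt D (D' x) x)
    (hD' : ∀ᶠ x in atTop, 0 < D' x)
    (hDtop : Tendsto D atTop atTop)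
    (hr : Tendsto (fun x => N' x / D' x) atTop (nhds L)) :
    Tendsto (fun x => N x / D x) atTop (nhds L) := by
  rw [Metric.tendsto_atTop]
  intro ε hε
  have hε4 : 0 < ε / 4 := by linarith
  have hr' : ∀ᶠ x in atTop, |N' x / D' x - L| < ε / 4 := by
    filter_upwards [hr (Metric.ball_mem_nhds L hε4)] with x hx
    simpa [Real.dist_eq] using hx
  obtain ⟨a, ha⟩ := eventually_atTop.mp (((hN.and hD).and (hD'.and hr')))
  -- D is increasing past a
  have hmono : ∀ s, a < s → D a < D s := by
    intro s hs
    have hcont : ContinuousOn D (Icc a s) := fun x hx =>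
      ((ha x hx.1).1.2.continuousAt).continuousWithinAt
    obtain ⟨ξ, hξ, hξ2⟩ := exists_hasDerivAt_eq_slope D D' hs hcont
      (fun x hx => (ha x hx.1.le).1.2)
    have h1 : 0 < D' ξ := (ha ξ hξ.1.le).2.1
    have h2 : 0 < s - a := by linarith [hξ.1, hξ.2]
    rw [hξ2] at h1
    rcases div_pos_iff.mp h1 with ⟨h3, _⟩ | ⟨_, h4⟩
    · linarith
    · linarith
  -- threshold from D → ∞
  obtain ⟨S₁, hS₁⟩ := eventually_atTop.mp
    (hDtop.eventually_ge_atTop (max (max 1 (2 * |D a|)) ((|N a| + |L| * |D a|) * (4 / ε))))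
  refine ⟨max S₁ (a + 1), fun s hs => ?_⟩
  have hsa : a < s := lt_of_lt_of_le (by linarith) (le_trans (le_max_right _ _) hs)
  have hDs := hS₁ s (le_trans (le_max_left _ _) hs)
  have hd1 : 1 ≤ D s := le_trans (le_trans (le_max_left _ _) (le_max_left _ _)) hDs
  have hd2 : 2 * |D a| ≤ D s := le_trans (le_trans (le_max_right _ _) (le_max_left _ _)) hDs
  have hd3 : (|N a| + |L| * |D a|) * (4 / ε) ≤ D s := le_trans (le_max_right _ _) hDs
  have hdpos : 0 < D s := by linarith
  -- Cauchy MVT on [a, s]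
  have hcontN : ContinuousOn N (Icc a s) := fun x hx =>
    ((ha x hx.1).1.1.continuousAt).continuousWithinAt
  have hcontD : ContinuousOn D (Icc a s) := fun x hx =>
    ((ha x hx.1).1.2.continuousAt).continuousWithinAt
  obtain ⟨ξ, hξ, hξ2⟩ := exists_ratio_hasDerivAt_eq_ratio_slope N N' hsa hcontN
    (fun x hx => (ha x hx.1.le).1.1) D D' hcontD (fun x hx => (ha x hx.1.le).1.2)
  have hD'ξ : 0 < D' ξ := (ha ξ hξ.1.le).2.1
  have hrξ : |N' ξ / D' ξ - L| < ε / 4 := (ha ξ hξ.1.le).2.2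
  set r := N' ξ / D' ξ with hrdef
  have hNs : N s = N a + r * (D s - D a) := by
    have : N s - N a = r * (D s - D a) := by
      rw [hrdef]
      field_simp
      linarith [hξ2]
    linarith
  have key : N s / D s - L = (N a - L * D a) / D s + (r - L) * ((D s - D a) / D s) := by
    rw [hNs]; field_simp; ring
  rw [Real.dist_eq, key]
  have b1 : |(N a - L * D a) / D s| ≤ ε / 4 := by
    rw [abs_div, abs_of_pos hdpos, div_le_iff₀ hdpos]
    have h5 : |N a - L * D a| ≤ |N a| + |L| * |D a| := by
      calc |N a - L * D a| ≤ |N a| + |L * D a| := abs_sub _ _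
        _ = |N a| + |L| * |D a| := by rw [abs_mul]
    have h6 : (|N a| + |L| * |D a|) ≤ D s * (ε/4) := by
      have h10 := mul_le_mul_of_nonneg_right hd3 hε4.le
      have h11 : (4/ε) * (ε/4) = 1 := by field_simp
      rw [mul_assoc, h11, mul_one] at h10
      linarith
    linarith
  have b2 : |(r - L) * ((D s - D a) / D s)| ≤ (ε/4) * 2 := by
    rw [abs_mul]
    have h8 : |(D s - D a) / D s| ≤ 2 := by
      rw [abs_div, abs_of_pos hdpos, div_le_iff₀ hdpos]
      have := abs_sub (D s) (D a)
      have := abs_nonneg (D a)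
      have h9 : |D s| = D s := abs_of_pos hdpos
      nlinarith
    nlinarith [abs_nonneg (r - L)]
  calc |(N a - L * D a) / D s + (r - L) * ((D s - D a) / D s)|
      ≤ |(N a - L * D a) / D s| + |(r - L) * ((D s - D a) / D s)| := abs_add_le _ _
    _ ≤ ε/4 + (ε/4)*2 := by linarith
    _ < ε := by linarith

theorem stmt_6 (c A B b₀ : ℝ) (hc : 0 < c) (h H : ℝ → ℝ) (hh : ContDiff ℝ 2 h)
    (hH : Tendsto H atTop (nhds (-b₀)))
    (hode : ∀ s, deriv (deriv h) s + (2 * c * s + A * h s + B) * deriv h s = H s)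
    (hh' : Tendsto (deriv h) atTop (nhds 0)) :
    Tendsto (fun s => s * deriv h s) atTop (nhds (-b₀ / (2 * c))) := by
  have hcont_h : Continuous h := hh.continuous
  have hh2 : ContDiff ℝ ((1 : WithTop ℕ∞) + 1) h := by
    have : ((1 : WithTop ℕ∞) + 1) = 2 := by norm_num
    rw [this]; exact hh
  have hdiffh : Differentiable ℝ h := hh.differentiable (by norm_num)
  have hdiffh' : Differentiable ℝ (deriv h) :=
    ((contDiff_succ_iff_deriv.mp hh2).2.2).differentiable one_ne_zero
  have hdiff : ∀ s, HasDerivAt h (deriv h s) s := fun s => (hdiffh s).hasDerivAt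
  have hdiff' : ∀ s, HasDerivAt (deriv h) (deriv (deriv h) s) s :=
    fun s => (hdiffh' s).hasDerivAt
  -- step 1 : h s / s → 0
  have hho : Tendsto (fun s => h s / s) atTop (nhds 0) := by
    have := lhop_top h id (deriv h) (fun _ => 1) 0
      (Eventually.of_forall hdiff) (Eventually.of_forall fun x => hasDerivAt_id x)
      (Eventually.of_forall fun x => one_pos) tendsto_id (by simpa using hh')
    simpa using this
  -- the integral of h
  set I : ℝ → ℝ := fun s => ∫ t in (0:ℝ)..s, h t with hIdef
  have hIder : ∀ s, HasDerivAt I (h s) s := fun s =>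
    (hcont_h.integral_hasStrictDerivAt 0 s).hasDerivAt
  -- step 2 : I s / s^2 → 0
  have hio : Tendsto (fun s => I s / s ^ 2) atTop (nhds 0) := by
    apply lhop_top I (fun s => s ^ 2) h (fun s => 2 * s) 0
      (Eventually.of_forall hIder)
      (Eventually.of_forall fun x =>
        (by simpa using hasDerivAt_pow 2 x : HasDerivAt (fun s : ℝ => s ^ 2) (2 * x) x))
      (by filter_upwards [eventually_gt_atTop (0:ℝ)] with x hx; positivity)
      (tendsto_pow_atTop (by norm_num))
    have : (fun s => h s / (2 * s)) = fun s => h s / s / 2 := by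
      funext s; rw [div_div, mul_comm]
    rw [this]
    simpa using hho.div_const 2
  -- integrating factor
  set φ : ℝ → ℝ := fun s => c * s ^ 2 + A * I s + B * s with hφdef
  have hφder : ∀ s, HasDerivAt φ (2 * c * s + A * h s + B) s := by
    intro s
    have h0 : HasDerivAt (fun x : ℝ => x ^ 2) (2 * s) s := by
      simpa using hasDerivAt_pow 2 s
    have h1 : HasDerivAt (fun s : ℝ => c * s ^ 2) (c * (2 * s)) s := h0.const_mul c
    have h2 : HasDerivAt (fun s => A * I s) (A * h s) s := (hIder s).const_mul A
    have h3 : HasDerivAt (fun s : ℝ => B * s) (B * 1) s := (hasDerivAt_id s).const_mul B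
    have := (h1.add h2).add h3
    exact this.congr_deriv (by ring)
  set f : ℝ → ℝ := fun s => Real.exp (φ s) with hfdef
  have hfpos : ∀ s, 0 < f s := fun s => Real.exp_pos _
  have hfder : ∀ s, HasDerivAt f (f s * (2 * c * s + A * h s + B)) s :=
    fun s => (hφder s).exp
  set g : ℝ → ℝ := fun s => (2 * c * s + A * h s + B) / s - 1 / s ^ 2 with hgdef
  -- g → 2c
  have hg2c : Tendsto g atTop (nhds (2 * c)) := by
    have base : Tendsto (fun s : ℝ => 2 * c + A * (h s / s) + B * s⁻¹ - (s⁻¹) ^ 2) atTop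
        (nhds (2 * c + A * 0 + B * 0 - 0 ^ 2)) :=
      ((tendsto_const_nhds.add (hho.const_mul A)).add
        (tendsto_inv_atTop_zero.const_mul B)).sub (tendsto_inv_atTop_zero.pow 2)
    have : (2 * c + A * 0 + B * 0 - 0 ^ 2) = 2 * c := by ring
    rw [this] at base
    apply base.congr'
    filter_upwards [eventually_gt_atTop (0:ℝ)] with s hs
    rw [hgdef]
    have hs' : s ≠ 0 := ne_of_gt hs
    field_simp
  have hgpos : ∀ᶠ s in atTop, 0 < g s := hg2c.eventually (eventually_gt_nhds (by linarith))
  -- N and D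
  set N : ℝ → ℝ := fun s => f s * deriv h s with hNdef
  set D : ℝ → ℝ := fun s => f s / s with hDdef
  have hNder : ∀ s, HasDerivAt N (f s * H s) s := by
    intro s
    have := (hfder s).mul (hdiff' s)
    exact this.congr_deriv (by rw [← hode s]; ring)
  have hDder : ∀ s : ℝ, 0 < s → HasDerivAt D (f s * g s) s := by
    intro s hs
    have hs' : s ≠ 0 := ne_of_gt hs
    have := (hfder s).div (hasDerivAt_id s) hs'
    refine this.congr_deriv ?_
    rw [hgdef]
    simp only [id]
    field_simp
  -- D → ∞
  have hDtop : Tendsto D atTop atTop := by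
    have hφratio : Tendsto (fun s => φ s / s ^ 2) atTop (nhds c) := by
      have base : Tendsto (fun s : ℝ => c + A * (I s / s ^ 2) + B * s⁻¹) atTop
          (nhds (c + A * 0 + B * 0)) :=
        (tendsto_const_nhds.add (hio.const_mul A)).add (tendsto_inv_atTop_zero.const_mul B)
      have : (c + A * 0 + B * 0) = c := by ring
      rw [this] at base
      apply base.congr'
      filter_upwards [eventually_gt_atTop (0:ℝ)] with s hs
      have hs' : s ≠ 0 := ne_of_gt hs
      rw [hφdef]
      field_simp
    have hφge : ∀ᶠ s in atTop, c / 2 * s ^ 2 ≤ φ s := by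
      filter_upwards [hφratio.eventually (eventually_ge_nhds (by linarith : c / 2 < c)),
        eventually_gt_atTop (0:ℝ)] with s h1 h2
      have hsq : (0:ℝ) < s ^ 2 := by positivity
      have h3 := mul_le_mul_of_nonneg_right h1 hsq.le
      have h4 : φ s / s ^ 2 * s ^ 2 = φ s := by field_simp
      linarith
    have hpoly : Tendsto (fun s : ℝ => c / 2 * s ^ 2 - s) atTop atTop := by
      have h1 : Tendsto (fun s : ℝ => c / 2 * s - 1) atTop atTop :=
        tendsto_atTop_add_const_right _ _ (tendsto_id.const_mul_atTop (by linarith))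
      have h2 := tendsto_id.atTop_mul_atTop₀ h1
      apply h2.congr
      intro s; simp; ring
    have hsub : Tendsto (fun s => φ s - Real.log s) atTop atTop := by
      apply tendsto_atTop_mono' _ _ hpoly
      filter_upwards [hφge, eventually_ge_atTop (1:ℝ)] with s h1 h2
      have hlog : Real.log s ≤ s := by
        have := Real.log_le_sub_one_of_pos (by linarith : 0 < s)
        linarith
      linarith
    have := Real.tendsto_exp_atTop.comp hsub
    apply this.congr'
    filter_upwards [eventually_ge_atTop (1:ℝ)] with s hs
    simp only [Function.comp]
    rw [Real.exp_sub, Real.exp_log (by linarith)]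
  -- ratio of derivatives
  have hr : Tendsto (fun s => f s * H s / (f s * g s)) atTop (nhds (-b₀ / (2 * c))) := by
    have := hH.div hg2c (by linarith : (2:ℝ) * c ≠ 0)
    apply this.congr'
    filter_upwards [] with s
    rw [mul_div_mul_left _ _ (ne_of_gt (hfpos s))]
    rfl
  -- apply l'Hopital
  have main := lhop_top N D (fun s => f s * H s) (fun s => f s * g s) (-b₀ / (2 * c))
    (Eventually.of_forall hNder)
    (by filter_upwards [eventually_gt_atTop (0:ℝ)] with s hs; exact hDder s hs)
    (by filter_upwards [hgpos] with s hs; exact mul_pos (hfpos s) hs)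
    hDtop hr
  apply main.congr'
  filter_upwards [eventually_gt_atTop (0:ℝ)] with s hs
  have hs' : s ≠ 0 := ne_of_gt hs
  have hf' : f s ≠ 0 := ne_of_gt (hfpos s)
  rw [hNdef, hDdef]
  field_simp
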